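/- Let q = −1 and let A be the ℂ-algebra T(V)#G localized to the setting of the motivational example with n = 2. Define a new multiplication on A[[t]] by a * b = ab + t·D₁(a)D₂(b) where D₁, D₂ are as in the motivational example. Then in the deformed algebra, w₁ * w₂ + w₂ * w₁ = −t w₃ σ₁, w₁ * w₃ + w₃ * w₁ = 0, and w₂ * w₃ − w₃ * w₂ = 0. -/
import Mathlib


/-- The underlying vector space of `S_q(V)#G` in the motivational example: it has basis
`{w₁ⁱ w₂ʲ w₃ᵐ g}` indexed by `(i,j,m) ∈ ℕ³` and `g = σ₁^a σ₂^b ∈ G = (ℤ/n)²`. -/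
abbrev SmashSpace (n : ℕ) := (ℕ × ℕ × ℕ × (ZMod n × ZMod n)) →₀ ℂ

/-- The quantum integer `(m)_q = 1 + q + ⋯ + q^(m−1)`. -/
noncomputable def qInt (q : ℂ) (m : ℕ) : ℂ := ∑ i ∈ Finset.range m, q ^ i

/-- The character `χ₁ : G → ℂˣ` evaluated at `g⁻¹`, for `g = σ₁^a σ₂^b`: since
`σ₁(w₁) = q w₁` and `σ₂(w₁) = w₁`, we have `χ₁(g) = q^a`, so `χ₁(g⁻¹) = q^((−a).val)`. -/
noncomputable def chi1inv (n : ℕ) (q : ℂ) (g : ZMod n × ZMod n) : ℂ := q ^ (-g.1).val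

/-- `D₁` on basis elements: `D₁(w₁ⁱw₂ʲw₃ᵐ g) = (i)_q q^(j+m) χ₁(g⁻¹) w₁^(i−1)w₂ʲw₃ᵐ σ₂ g`
(a negative exponent is interpreted as `0`; indeed `(0)_q = 0`). -/
noncomputable def D1fun (n : ℕ) (q : ℂ) :
    ℕ × ℕ × ℕ × (ZMod n × ZMod n) → SmashSpace n
  | (i, j, m, (a, b)) =>
      (qInt q i * q ^ (j + m) * chi1inv n q (a, b)) •
        Finsupp.single (i - 1, j, m, (a, b + 1)) 1

/-- `D₂` on basis elements: `D₂(w₁ⁱw₂ʲw₃ᵐ g) = (j)_{q⁻¹} qⁱ w₁ⁱw₂^(j−1)w₃^(m+1) σ₁σ₂⁻¹ g`. -/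
noncomputable def D2fun (n : ℕ) (q : ℂ) :
    ℕ × ℕ × ℕ × (ZMod n × ZMod n) → SmashSpace n
  | (i, j, m, (a, b)) =>
      (qInt q⁻¹ j * q ^ i) • Finsupp.single (i, j - 1, m + 1, (a + 1, b - 1)) 1

/-- `σ` on basis elements: `σ(w₁ⁱw₂ʲw₃ᵐ g) = qⁱ χ₁(g⁻¹) w₁ⁱw₂ʲw₃ᵐ g`. -/
noncomputable def sigmafun (n : ℕ) (q : ℂ) :
    ℕ × ℕ × ℕ × (ZMod n × ZMod n) → SmashSpace n
  | (i, j, m, (a, b)) =>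
      (q ^ i * chi1inv n q (a, b)) • Finsupp.single (i, j, m, (a, b)) 1

/-- The `ℂ`-linear extension of a map defined on the monomial basis. -/
noncomputable def extend (n : ℕ)
    (f : ℕ × ℕ × ℕ × (ZMod n × ZMod n) → SmashSpace n) :
    SmashSpace n →ₗ[ℂ] SmashSpace n :=
  Finsupp.lsum ℂ fun p => LinearMap.toSpanSingleton ℂ (SmashSpace n) (f p)

/-- The smash product multiplication on basis elements (see `mulfun` in the general case):
`(w₁ⁱw₂ʲw₃ᵐ # g)·(w₁^{i'}w₂^{j'}w₃^{m'} # g') = χ₁(g)^{i'}χ₂(g)^{j'}χ₃(g)^{m'} q^{-i'(j+m)}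
· w₁^{i+i'}w₂^{j+j'}w₃^{m+m'} # (gg')`. -/
noncomputable def mulfun (n : ℕ) (q : ℂ) :
    ℕ × ℕ × ℕ × (ZMod n × ZMod n) → ℕ × ℕ × ℕ × (ZMod n × ZMod n) → SmashSpace n
  | (i, j, m, (a, b)), (i', j', m', (a', b')) =>
      (q ^ (a.val * i' + b.val * j' + (a.val + b.val) * m') * q⁻¹ ^ (i' * (j + m))) •
        Finsupp.single (i + i', j + j', m + m', (a + a', b + b')) 1

/-- The bilinear extension of `mulfun`: the multiplication of `S_q(V)#G`. -/
noncomputable def smul2 (n : ℕ) (q : ℂ) :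
    SmashSpace n →ₗ[ℂ] SmashSpace n →ₗ[ℂ] SmashSpace n :=
  Finsupp.lsum ℂ fun p => LinearMap.toSpanSingleton ℂ (SmashSpace n →ₗ[ℂ] SmashSpace n)
    (Finsupp.lsum ℂ fun p' => LinearMap.toSpanSingleton ℂ (SmashSpace n) (mulfun n q p p'))

/-- The deformed multiplication `a * b = ab + t·D₁(a)D₂(b)`; an element of
`(S_q(V)#G)[[t]]` with polynomial coefficients is recorded as a finitely supported
function `ℕ →₀ S_q(V)#G` of the powers of `t`. -/
noncomputable def star (n : ℕ) (q : ℂ) (a b : SmashSpace n) : ℕ →₀ SmashSpace n :=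
  Finsupp.single 0 (smul2 n q a b) +
    Finsupp.single 1 (smul2 n q (extend n (D1fun n q) a) (extend n (D2fun n q) b))


lemma extend_single (n : ℕ) (f : ℕ × ℕ × ℕ × (ZMod n × ZMod n) → SmashSpace n)
    (p : ℕ × ℕ × ℕ × (ZMod n × ZMod n)) :
    extend n f (Finsupp.single p (1:ℂ)) = f p := by
  simp [extend]

lemma smul2_single (n : ℕ) (q : ℂ) (p p' : ℕ × ℕ × ℕ × (ZMod n × ZMod n)) :
    smul2 n q (Finsupp.single p (1:ℂ)) (Finsupp.single p' (1:ℂ)) = mulfun n q p p' := by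
  simp [smul2]

/-- For `q = −1` (so `n = 2`) in the motivational example, the deformed
multiplication `a * b = ab + t·D₁(a)D₂(b)` satisfies `w₁*w₂ + w₂*w₁ = −t w₃σ₁`,
`w₁*w₃ + w₃*w₁ = 0`, and `w₂*w₃ − w₃*w₂ = 0`. -/
theorem motivational_deformed_relations :
    let q : ℂ := -1
    let w₁ : SmashSpace 2 := Finsupp.single (1, 0, 0, (0, 0)) 1
    let w₂ : SmashSpace 2 := Finsupp.single (0, 1, 0, (0, 0)) 1
    let w₃ : SmashSpace 2 := Finsupp.single (0, 0, 1, (0, 0)) 1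
    -- `w₃ σ₁` : the basis element `w₃ # σ₁`
    let w₃σ₁ : SmashSpace 2 := Finsupp.single (0, 0, 1, (1, 0)) 1
    star 2 q w₁ w₂ + star 2 q w₂ w₁ = Finsupp.single 1 (-w₃σ₁) ∧
    star 2 q w₁ w₃ + star 2 q w₃ w₁ = 0 ∧
    star 2 q w₂ w₃ - star 2 q w₃ w₂ = 0 := by

  unfold _root_.star
  simp only [extend_single, D1fun, D2fun, map_smul, LinearMap.smul_apply, smul2_single,
    mulfun, qInt, chi1inv, smul_smul]
  norm_num [ZMod.val_one]
  refine ⟨by abel, by abel, by abel⟩
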